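/- Let μ ≥ 0 be given by μ(y) = –log F(y) for a distribution function F with F(y) > 0, let φ : [0,∞) → (0,1] be a Laplace transform, and t > 0. If G_t(y) = (φ(μ(y)))^t and φ is selfdecomposable (for every c ∈ (0,1) there is a Laplace transform φ_c with φ(s) = φ(c·s)·φ_c(s)), and F is max-stable with F(y) = (F(b·y))^{a(b)} for every b > 1 with a(b) > 1, then for every b > 1, G_t(y) = G_t(b·y)·(φ_{1/a(b)}(μ(y)))^t for all y with F(y) > 0; i.e., each marginal of the compound extremal process is max-selfdecomposable. -/

import Mathlib

theorem stmt_16 (F φ : ℝ → ℝ) (Φ : ℝ → ℝ → ℝ) (a : ℝ → ℝ) (t : ℝ) (ht : 0 < t)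
    (hF01 : ∀ y : ℝ, 0 ≤ F y ∧ F y ≤ 1)
    (hφ : ∀ s : ℝ, 0 ≤ s → 0 < φ s ∧ φ s ≤ 1)
    (hΦ : ∀ c : ℝ, c ∈ Set.Ioo (0:ℝ) 1 → ∀ s : ℝ, 0 ≤ s → 0 < Φ c s ∧ Φ c s ≤ 1)
    (hSD : ∀ c : ℝ, c ∈ Set.Ioo (0:ℝ) 1 → ∀ s : ℝ, 0 ≤ s → φ s = φ (c * s) * Φ c s)
    (hms : ∀ b : ℝ, 1 < b → 1 < a b ∧ ∀ y : ℝ, F y = (F (b * y)) ^ (a b)) :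
    ∀ b : ℝ, 1 < b → ∀ y : ℝ, 0 < F y →
      (φ (-Real.log (F y))) ^ t =
        (φ (-Real.log (F (b * y)))) ^ t * (Φ (1 / a b) (-Real.log (F y))) ^ t := by
  intro b hb y hFy
  obtain ⟨ha, hstab⟩ := hms b hb
  have ha0 : 0 < a b := lt_trans one_pos ha
  have hc : (1 / a b) ∈ Set.Ioo (0:ℝ) 1 := ⟨by positivity, by rw [div_lt_one ha0]; linarith⟩
  -- F (b*y) > 0
  have hFby : 0 < F (b * y) := by
    by_contra h
    push_neg at h
    have h0 : F (b * y) = 0 := le_antisymm h (hF01 (b * y)).1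
    rw [hstab y, h0, Real.zero_rpow (by linarith : a b ≠ 0)] at hFy
    exact lt_irrefl 0 hFy
  have hμ : 0 ≤ -Real.log (F y) := by
    have := Real.log_nonpos (le_of_lt hFy) (hF01 y).2
    linarith
  -- log relation
  have hlog : -Real.log (F (b * y)) = (1 / a b) * (-Real.log (F y)) := by
    have : Real.log (F y) = a b * Real.log (F (b * y)) := by
      rw [hstab y, Real.log_rpow hFby]
    rw [this]
    field_simp
  have hsd := hSD (1 / a b) hc (-Real.log (F y)) hμ
  rw [← hlog] at hsd
  rw [hsd]
  have h1 := (hφ (-Real.log (F (b * y))) (by rw [hlog]; positivity)).1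
  have h2 := (hΦ (1 / a b) hc (-Real.log (F y)) hμ).1
  exact Real.mul_rpow h1.le h2.le
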